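/- Let X be a spherical 2-design of size n in √m S^{m-1} which is an s-distance set of degree S = s. Then μ = tr(F_s) satisfies 0 < μ and μ(1 - μ/q_s(m)) = ⟨F_s,F_s⟩ - ⟨F̃_s,F̃_s⟩ ≥ 0, where F̃_s is the orthogonal projection of F_s onto 𝔄* = {(1/n)p((nG)^∘) : p ∈ ℝ[t]} with respect to the trace inner product ⟨R,S⟩ = tr(RᵀS); in particular q_s(m) > 0 and μ ≤ q_s(m). -/

import Mathlib

open scoped InnerProductSpace Classical

noncomputable section

variable {V : Type*} [NormedAddCommGroup V] [InnerProductSpace ℝ V]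

/-- `X` lies on the sphere of squared radius `m` (radius `√m`). -/
def onSphere (m : ℝ) (X : Finset V) : Prop := ∀ x ∈ X, ⟪x, x⟫_ℝ = m

/-- The normalized Gram matrix `G` of `X`. -/
def gram (X : Finset V) : Matrix X X ℝ :=
  Matrix.of fun x y => (1 / (X.card : ℝ)) * ⟪(x : V), (y : V)⟫_ℝ

/-- The two conditions characterizing spherical 2-designs: `GJ = 0` and `G² = G`. -/
def IsTwoDesign (X : Finset V) : Prop :=
  (∀ x ∈ X, ∑ y ∈ X, ⟪x, y⟫_ℝ = 0) ∧
  (∀ x ∈ X, ∀ y ∈ X, (1 / (X.card : ℝ)) * ∑ z ∈ X, ⟪x, z⟫_ℝ * ⟪z, y⟫_ℝ = ⟪x, y⟫_ℝ)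

/-- `Pol_k(X)`: span of the zonal polynomials of degree at most `k`. -/
def Pol (X : Finset V) (k : ℕ) : Submodule ℝ (X → ℝ) :=
  Submodule.span ℝ {f | ∃ a ∈ X, ∃ p : Polynomial ℝ,
    p.natDegree ≤ k ∧ f = fun x => p.eval ⟪a, x.1⟫_ℝ}

/-- The inner product `(f,g) = (1/n) ∑ f(x) g(x)` on `C(X)`. -/
def inn (X : Finset V) (f g : X → ℝ) : ℝ := (1 / (X.card : ℝ)) * ∑ x, f x * g x

def innL (X : Finset V) (f : X → ℝ) : (X → ℝ) →ₗ[ℝ] ℝ where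
  toFun g := inn X f g
  map_add' g h := by
    simp only [inn, Pi.add_apply, mul_add, Finset.sum_add_distrib]
  map_smul' c g := by
    simp only [inn, Pi.smul_apply, smul_eq_mul, RingHom.id_apply]
    rw [Finset.sum_congr rfl (fun x _ => by ring : ∀ x ∈ Finset.univ, f x * (c * g x) = c * (f x * g x)),
      ← Finset.mul_sum]
    ring

/-- The orthogonal complement of `W` with respect to `inn`. -/
def perp (X : Finset V) (W : Submodule ℝ (X → ℝ)) : Submodule ℝ (X → ℝ) :=
  ⨅ f ∈ W, LinearMap.ker (innL X f)

/-- The harmonic spaces `Harm_k(X)`. -/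
def Harm (X : Finset V) : ℕ → Submodule ℝ (X → ℝ)
  | 0 => Pol X 0
  | (k+1) => Pol X (k+1) ⊓ perp X (Pol X k)

/-- `F` is the matrix of the orthogonal projection of `C(X)` onto `W`
(with respect to the inner product `inn`). -/
def IsProjOnto (X : Finset V) (W : Submodule ℝ (X → ℝ)) (F : Matrix X X ℝ) : Prop :=
  (∀ f, F.mulVec f ∈ W) ∧ (∀ f ∈ W, F.mulVec f = f) ∧ (∀ f ∈ perp X W, F.mulVec f = 0)

/-- The degree `S` of `X`: the least `i` with `Pol_i(X) = C(X)`. -/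
def degS (X : Finset V) : ℕ := sInf {i | Pol X i = ⊤}

/-- `A(X)`, the set of inner products between distinct points of `X`. -/
def Aset (X : Finset V) : Finset ℝ :=
  ((X ×ˢ X).filter fun p => p.1 ≠ p.2).image fun p => ⟪p.1, p.2⟫_ℝ

/-- `A'(X) = A(X) ∪ {m}`. -/
def Aset' (m : ℝ) (X : Finset V) : Finset ℝ := insert m (Aset X)

/-- `κ_α`, the number of ordered pairs of points of `X` with inner product `α`. -/
def kappa (X : Finset V) (α : ℝ) : ℕ := ((X ×ˢ X).filter fun p => ⟪p.1, p.2⟫_ℝ = α).card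

/-- The inner product `⟨p,q⟩ = (1/n²) ∑_{α ∈ A'(X)} κ_α p(α) q(α)` on polynomials. -/
def pInn (m : ℝ) (X : Finset V) (p q : Polynomial ℝ) : ℝ :=
  (1 / (X.card : ℝ) ^ 2) * ∑ α ∈ Aset' m X, (kappa X α : ℝ) * (p.eval α * q.eval α)

/-- `q` is the family of predegree polynomials of `X`. -/
def IsPredegree (m : ℝ) (X : Finset V) (s : ℕ) (q : ℕ → Polynomial ℝ) : Prop :=
  (∀ k ≤ s, (q k).natDegree = k ∧ q k ≠ 0) ∧
  (∀ k ≤ s, ∀ h ≤ s, pInn m X (q k) (q h) = if k = h then (q k).eval m else 0)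

/-- The relation matrix `A_α` of `X`. -/
def relMat (X : Finset V) (α : ℝ) : Matrix X X ℝ :=
  Matrix.of fun x y => if ⟪(x : V), (y : V)⟫_ℝ = α then 1 else 0

/-- `X` carries the structure of a `Q`-polynomial association scheme with respect to
the idempotents `F_0, …, F_s` (whose relations are given by the inner products). -/
def CarriesQPolyScheme (m : ℝ) (X : Finset V) (s : ℕ) (F : ℕ → Matrix X X ℝ) : Prop :=
  (∀ α ∈ Aset' m X, ∀ β ∈ Aset' m X, relMat X α * relMat X β ∈
      Submodule.span ℝ (relMat X '' (Aset' m X : Set ℝ))) ∧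
  (∀ i ≤ s, F i ∈ Submodule.span ℝ (relMat X '' (Aset' m X : Set ℝ))) ∧
  (∀ i ≤ s, ∀ j ≤ s, F i * F j = if i = j then F i else 0) ∧
  (∑ i ∈ Finset.range (s + 1), F i = 1) ∧
  (F 0 = Matrix.of fun _ _ => 1 / (X.card : ℝ)) ∧
  (∀ i ≤ s, ∃ v : Polynomial ℝ, v.natDegree = i ∧
      F i = Matrix.of fun x y => (1 / (X.card : ℝ)) * v.eval ((X.card : ℝ) * F 1 x y))



lemma inn_symm (X : Finset V) (f g : X → ℝ) : inn X f g = inn X g f := by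
  simp only [inn]
  congr 1
  exact Finset.sum_congr rfl fun x _ => mul_comm _ _

lemma mem_perp_iff {X : Finset V} {W : Submodule ℝ (X → ℝ)} {g : X → ℝ} :
    g ∈ perp X W ↔ ∀ f ∈ W, inn X f g = 0 := by
  simp only [perp, Submodule.mem_iInf, LinearMap.mem_ker]
  rfl

lemma exists_decomp (X : Finset V) (W : Submodule ℝ (X → ℝ)) (v : X → ℝ) :
    ∃ a ∈ W, v - a ∈ perp X W := by
  classical
  let e : EuclideanSpace ℝ X ≃ₗ[ℝ] (X → ℝ) := WithLp.linearEquiv 2 ℝ (X → ℝ)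
  let W' : Submodule ℝ (EuclideanSpace ℝ X) := W.comap e.toLinearMap
  obtain ⟨a, ha, b, hb, hab⟩ := W'.exists_add_mem_mem_orthogonal (e.symm v)
  refine ⟨e a, ha, ?_⟩
  have hv : v - e a = e b := by
    apply e.symm.injective
    simp only [map_sub, LinearEquiv.symm_apply_apply, hab]
    abel
  rw [hv, mem_perp_iff]
  intro f hf
  have h0 : (inner ℝ (e.symm f) b : ℝ) = 0 := by
    exact (Submodule.mem_orthogonal W' b).1 hb (e.symm f) (by simpa [W'] using hf)
  have hsum : ∑ x, f x * (e b) x = 0 := by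
    rw [← h0, PiLp.inner_apply]
    exact Finset.sum_congr rfl fun x _ => by
      simp [e, RCLike.inner_apply, WithLp.linearEquiv, mul_comm]
  simp only [inn]
  rw [hsum, mul_zero]

lemma perp_pairing {X : Finset V} (hne : X.Nonempty) {W : Submodule ℝ (X → ℝ)} {f g : X → ℝ}
    (hf : f ∈ W) (hg : g ∈ perp X W) : ∑ x, f x * g x = 0 := by
  have h := mem_perp_iff.1 hg f hf
  have hn : (X.card : ℝ) ≠ 0 := Nat.cast_ne_zero.2 (Finset.card_ne_zero_of_mem hne.choose_spec)
  simpa [inn, hn] using h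

lemma proj_sub_mem {X : Finset V} {W : Submodule ℝ (X → ℝ)} {P : Matrix X X ℝ}
    (hP : IsProjOnto X W P) (v : X → ℝ) : v - P.mulVec v ∈ perp X W := by
  obtain ⟨a, ha, hva⟩ := exists_decomp X W v
  have hPv : P.mulVec v = a := by
    have hv' : a + (v - a) = v := by funext z; show a z + (v z - a z) = v z; ring
    conv_lhs => rw [← hv']
    rw [Matrix.mulVec_add, hP.2.1 a ha, hP.2.2 _ hva, add_zero]
  rwa [hPv]

lemma proj_selfadj {X : Finset V} (hne : X.Nonempty) {W : Submodule ℝ (X → ℝ)} {P : Matrix X X ℝ}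
    (hP : IsProjOnto X W P) (v w : X → ℝ) :
    ∑ x, P.mulVec v x * w x = ∑ x, v x * P.mulVec w x := by
  have key : ∀ u z : X → ℝ, ∑ x, P.mulVec u x * z x = ∑ x, P.mulVec u x * P.mulVec z x := by
    intro u z
    have h0 : ∑ x, P.mulVec u x * (z - P.mulVec z) x = 0 :=
      perp_pairing hne (hP.1 u) (proj_sub_mem hP z)
    have : ∀ x, P.mulVec u x * z x
        = P.mulVec u x * P.mulVec z x + P.mulVec u x * (z - P.mulVec z) x := by
      intro x; simp [Pi.sub_apply]; ring
    rw [Finset.sum_congr rfl fun x _ => this x, Finset.sum_add_distrib, h0, add_zero]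
  rw [key v w]
  have h0 : ∑ x, P.mulVec w x * (v - P.mulVec v) x = 0 :=
    perp_pairing hne (hP.1 w) (proj_sub_mem hP v)
  have : ∀ x, v x * P.mulVec w x
      = P.mulVec v x * P.mulVec w x + P.mulVec w x * (v - P.mulVec v) x := by
    intro x; simp [Pi.sub_apply]; ring
  rw [Finset.sum_congr rfl fun x _ => this x, Finset.sum_add_distrib, h0, add_zero]

lemma proj_symm {X : Finset V} (hne : X.Nonempty) {W : Submodule ℝ (X → ℝ)} {P : Matrix X X ℝ}
    (hP : IsProjOnto X W P) : P.transpose = P := by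
  classical
  ext x y
  have h := proj_selfadj hne hP (Pi.single y 1) (Pi.single x 1)
  simp only [Matrix.mulVec_single, Pi.single_apply, mul_ite, ite_mul, mul_one, mul_zero,
    zero_mul, one_mul, Finset.sum_ite_eq, Finset.sum_ite_eq', Finset.mem_univ, if_true] at h
  simpa [Matrix.transpose_apply] using h.symm

lemma proj_idem {X : Finset V} {W : Submodule ℝ (X → ℝ)} {P : Matrix X X ℝ}
    (hP : IsProjOnto X W P) : P * P = P := by
  classical
  ext x y
  have h : (P * P).mulVec (Pi.single y 1) = P.mulVec (Pi.single y 1) := by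
    rw [← Matrix.mulVec_mulVec]
    exact hP.2.1 _ (hP.1 _)
  have := congrFun h x
  simpa [Matrix.mulVec_single] using this

lemma Pol_mono (X : Finset V) {k k' : ℕ} (h : k ≤ k') : Pol X k ≤ Pol X k' :=
  Submodule.span_mono fun f hf => by
    obtain ⟨a, ha, p, hp, hfp⟩ := hf
    exact ⟨a, ha, p, hp.trans h, hfp⟩

lemma QmulVec_mem_Pol (X : Finset V) (k : ℕ) (p : Polynomial ℝ) (hp : p.natDegree ≤ k)
    (w : X → ℝ) :
    (Matrix.of fun x y : X => p.eval ⟪x.1, y.1⟫_ℝ).mulVec w ∈ Pol X k := by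
  have hfun : (Matrix.of fun x y : X => p.eval ⟪x.1, y.1⟫_ℝ).mulVec w
      = ∑ y : X, w y • (fun x : X => p.eval ⟪y.1, x.1⟫_ℝ) := by
    funext x
    rw [Finset.sum_apply]
    simp only [Matrix.mulVec, dotProduct, Matrix.of_apply, Pi.smul_apply, smul_eq_mul]
    exact Finset.sum_congr rfl fun y _ => by rw [real_inner_comm]; ring
  rw [hfun]
  exact Submodule.sum_mem _ fun y _ => Submodule.smul_mem _ _
    (Submodule.subset_span ⟨y.1, y.2, p, hp, rfl⟩)

lemma Pol_le_perp_Harm (X : Finset V) (t : ℕ) : Pol X t ≤ perp X (Harm X (t + 1)) := by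
  intro g hg
  rw [mem_perp_iff]
  intro f hf
  have hf' : f ∈ Pol X (t+1) ⊓ perp X (Pol X t) := hf
  rw [inn_symm]
  exact mem_perp_iff.1 (Submodule.mem_inf.1 hf').2 g hg

lemma m_not_mem_Aset {m : ℝ} {X : Finset V} (hsph : onSphere m X) : m ∉ Aset X := by
  intro hm
  obtain ⟨⟨x, y⟩, hmem, hip⟩ := Finset.mem_image.1 hm
  rw [Finset.mem_filter, Finset.mem_product] at hmem
  obtain ⟨⟨hx, hy⟩, hxy⟩ := hmem
  dsimp only at hip hxy hx hy
  apply hxy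
  have hyx : (⟪y, x⟫_ℝ : ℝ) = m := by rw [real_inner_comm]; exact hip
  have hz : (⟪x - y, x - y⟫_ℝ : ℝ) = 0 := by
    rw [inner_sub_left, inner_sub_right, inner_sub_right, hsph x hx, hsph y hy, hyx, hip]
    ring
  exact sub_eq_zero.1 (inner_self_eq_zero.1 hz)

lemma sum_pairs (m : ℝ) (X : Finset V) (hsph : onSphere m X) (f : ℝ → ℝ) :
    ∑ x : X, ∑ y : X, f ⟪x.1, y.1⟫_ℝ = ∑ α ∈ Aset' m X, (kappa X α : ℝ) * f α := by
  classical
  have hmaps : ∀ p ∈ X ×ˢ X, (⟪p.1, p.2⟫_ℝ : ℝ) ∈ Aset' m X := by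
    rintro ⟨x, y⟩ hp
    rw [Finset.mem_product] at hp
    by_cases hxy : x = y
    · subst hxy
      rw [hsph x hp.1]
      exact Finset.mem_insert_self _ _
    · exact Finset.mem_insert_of_mem (Finset.mem_image.2
        ⟨(x, y), Finset.mem_filter.2 ⟨Finset.mem_product.2 hp, hxy⟩, rfl⟩)
  have h1 : ∑ x : X, ∑ y : X, f ⟪x.1, y.1⟫_ℝ = ∑ p ∈ X ×ˢ X, f ⟪p.1, p.2⟫_ℝ := by
    rw [Finset.sum_product]
    rw [← Finset.sum_coe_sort X (fun x => ∑ y ∈ X, f ⟪x, y⟫_ℝ)]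
    exact Finset.sum_congr rfl fun x _ => Finset.sum_coe_sort X fun y => f ⟪x.1, y⟫_ℝ
  rw [h1, ← Finset.sum_fiberwise_of_maps_to hmaps (fun p => f ⟪p.1, p.2⟫_ℝ)]
  refine Finset.sum_congr rfl fun α _ => ?_
  rw [kappa]
  rw [Finset.sum_congr rfl (fun p hp => by rw [(Finset.mem_filter.1 hp).2] :
    ∀ p ∈ (X ×ˢ X).filter fun p => ⟪p.1, p.2⟫_ℝ = α, f ⟪p.1, p.2⟫_ℝ = f α)]
  rw [Finset.sum_const, nsmul_eq_mul]

lemma kappa_pos {m : ℝ} {X : Finset V} (hne : X.Nonempty) (hsph : onSphere m X) :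
    ∀ α ∈ Aset' m X, 0 < kappa X α := by
  intro α hα
  rw [kappa, Finset.card_pos]
  rcases Finset.mem_insert.1 hα with h | h
  · obtain ⟨x, hx⟩ := hne
    exact ⟨(x, x), Finset.mem_filter.2 ⟨Finset.mem_product.2 ⟨hx, hx⟩, by rw [hsph x hx, h]⟩⟩
  · obtain ⟨p, hp, hip⟩ := Finset.mem_image.1 h
    exact ⟨p, Finset.mem_filter.2 ⟨(Finset.mem_filter.1 hp).1, hip⟩⟩

lemma rep_aux (s : ℕ) (q : ℕ → Polynomial ℝ) (hq1 : ∀ k ≤ s, (q k).natDegree = k ∧ q k ≠ 0) :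
    ∀ N (p : Polynomial ℝ), p.natDegree ≤ s → p.natDegree < N →
    ∃ c : ℕ → ℝ, p = ∑ k ∈ Finset.range (s + 1), Polynomial.C (c k) * q k := by
  intro N
  induction N with
  | zero => intro p _ h; omega
  | succ N ih =>
    intro p hps hpN
    by_cases hp0 : p = 0
    · exact ⟨fun _ => 0, by simp [hp0]⟩
    set d := p.natDegree with hd
    have hds : d ≤ s := hps
    have hqd : (q d).natDegree = d := (hq1 d hds).1
    have hqd0 : q d ≠ 0 := (hq1 d hds).2
    set a := (q d).coeff d with ha
    have ha0 : a ≠ 0 := by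
      have h := Polynomial.leadingCoeff_ne_zero.2 hqd0
      rwa [Polynomial.leadingCoeff, hqd] at h
    set r := p - Polynomial.C (p.coeff d / a) * q d with hr
    have hrd : r.natDegree ≤ d := by
      apply le_trans (Polynomial.natDegree_sub_le _ _)
      simp only [max_le_iff]
      exact ⟨le_refl _, le_trans (Polynomial.natDegree_C_mul_le _ _) (le_of_eq hqd)⟩
    have hcoeff : r.coeff d = 0 := by
      rw [hr, Polynomial.coeff_sub, Polynomial.coeff_C_mul, div_mul_cancel₀ _ ha0, sub_self]
    have hkey : r = 0 ∨ r.natDegree < d := by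
      by_cases hr0 : r = 0
      · exact Or.inl hr0
      · right
        rcases lt_or_eq_of_le hrd with h | h
        · exact h
        · exfalso
          exact Polynomial.leadingCoeff_ne_zero.2 hr0 (by rw [Polynomial.leadingCoeff, h, hcoeff])
    have hrrep : ∃ c' : ℕ → ℝ, r = ∑ k ∈ Finset.range (s + 1), Polynomial.C (c' k) * q k := by
      rcases hkey with h | h
      · exact ⟨fun _ => 0, by simp [h]⟩
      · exact ih r (le_trans (le_of_lt h) hds) (by omega)
    obtain ⟨c', hc'⟩ := hrrep
    refine ⟨fun k => (if k = d then p.coeff d / a else 0) + c' k, ?_⟩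
    have hsplit : ∀ k, Polynomial.C ((if k = d then p.coeff d / a else 0) + c' k) * q k
        = (if k = d then Polynomial.C (p.coeff d / a) * q d else 0) + Polynomial.C (c' k) * q k := by
      intro k
      by_cases hk : k = d <;> simp [hk, add_mul]
    rw [Finset.sum_congr rfl fun k _ => hsplit k, Finset.sum_add_distrib,
      Finset.sum_ite_eq' (Finset.range (s+1)) d
        (fun _ => Polynomial.C (p.coeff d / a) * q d),
      if_pos (Finset.mem_range.2 (by omega)), ← hc', hr]
    ring

lemma sq_sum_expand {ι : Type*} [Fintype ι] (f g : ι → ℝ) :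
    ∑ i, (f i - g i)^2 = (∑ i, f i * f i) - 2*(∑ i, f i * g i) + ∑ i, g i * g i := by
  rw [Finset.mul_sum, ← Finset.sum_sub_distrib, ← Finset.sum_add_distrib]
  exact Finset.sum_congr rfl fun i _ => by ring

theorem statement_14 {m : ℕ} (X : Finset (EuclideanSpace ℝ (Fin m))) (hne : X.Nonempty)
    (hsph : onSphere (m : ℝ) X) (hdes : IsTwoDesign X) (s : ℕ) (hs : (Aset X).card = s)
    (hdeg : degS X = s)
    (F : ℕ → Matrix X X ℝ) (hF : ∀ i, IsProjOnto X (Harm X i) (F i))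
    (q : ℕ → Polynomial ℝ) (hq : IsPredegree (m : ℝ) X s q) :
    ∀ T : Matrix X X ℝ,
      T = (Matrix.of fun x y =>
          (Matrix.trace (F s) / ((X.card : ℝ) * (q s).eval (m : ℝ))) *
            (q s).eval ⟪x.1, y.1⟫_ℝ) →
      0 < Matrix.trace (F s) ∧
      Matrix.trace (F s) * (1 - Matrix.trace (F s) / (q s).eval (m : ℝ)) =
        Matrix.trace ((F s).transpose * F s) - Matrix.trace (T.transpose * T) ∧
      0 ≤ Matrix.trace (F s) * (1 - Matrix.trace (F s) / (q s).eval (m : ℝ)) ∧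
      0 < (q s).eval (m : ℝ) ∧
      Matrix.trace (F s) ≤ (q s).eval (m : ℝ) := by
  classical
  intro T hT
  obtain ⟨hq1, hq2⟩ := hq
  set n : ℝ := (X.card : ℝ) with hn
  have hnpos : 0 < n := by
    rw [hn]; exact_mod_cast Finset.card_pos.2 hne
  have hn0 : n ≠ 0 := ne_of_gt hnpos
  set μ := Matrix.trace (F s) with hμ
  set qm := (q s).eval (m : ℝ) with hqm
  have hP := hF s
  have hPsymm : (F s).transpose = F s := proj_symm hne hP
  have hPidem : F s * F s = F s := proj_idem hP
  set Q : ℕ → Matrix X X ℝ := fun k => Matrix.of fun x y => (q k).eval ⟪x.1, y.1⟫_ℝ with hQ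
  have trace_mul : ∀ A B : Matrix X X ℝ,
      Matrix.trace (A * B) = ∑ x : X, ∑ y : X, A x y * B y x := by
    intro A B
    simp [Matrix.trace, Matrix.diag, Matrix.mul_apply]
  have hmA : ((m : ℕ) : ℝ) ∉ Aset X := m_not_mem_Aset hsph
  have hcard' : (Aset' (m : ℝ) X).card = s + 1 := by
    rw [Aset', Finset.card_insert_of_notMem hmA, hs]
  have hpair_poly : ∀ p1 p2 : Polynomial ℝ,
      ∑ x : X, ∑ y : X, p1.eval ⟪x.1, y.1⟫_ℝ * p2.eval ⟪x.1, y.1⟫_ℝ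
        = n^2 * pInn (m : ℝ) X p1 p2 := by
    intro p1 p2
    rw [sum_pairs (m : ℝ) X hsph (fun t => p1.eval t * p2.eval t), pInn, ← hn]
    field_simp
  have hqm_eq : pInn (m : ℝ) X (q s) (q s) = qm := by
    simpa using hq2 s le_rfl s le_rfl
  have hterm_nonneg : ∀ α ∈ Aset' (m:ℝ) X,
      (0:ℝ) ≤ (kappa X α : ℝ) * ((q s).eval α * (q s).eval α) :=
    fun α _ => mul_nonneg (Nat.cast_nonneg _) (mul_self_nonneg _)
  have hqm_pos : 0 < qm := by
    have hge : 0 ≤ qm := by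
      rw [← hqm_eq, pInn]
      apply mul_nonneg (by positivity) (Finset.sum_nonneg hterm_nonneg)
    rcases eq_or_lt_of_le hge with h0 | h
    · exfalso
      have hS0 : ∑ α ∈ Aset' (m:ℝ) X, (kappa X α : ℝ) * ((q s).eval α * (q s).eval α) = 0 := by
        have h1 : pInn (m:ℝ) X (q s) (q s) = 0 := by rw [hqm_eq, ← h0]
        rw [pInn, ← hn] at h1
        have h2 : (1 / n^2) ≠ 0 := by positivity
        exact (mul_eq_zero.1 h1).resolve_left h2
      have hall : ∀ α ∈ Aset' (m:ℝ) X, (q s).eval α = 0 := by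
        intro α hα
        have h3 := (Finset.sum_eq_zero_iff_of_nonneg hterm_nonneg).1 hS0 α hα
        have hκ : (kappa X α : ℝ) ≠ 0 :=
          Nat.cast_ne_zero.2 (kappa_pos hne hsph α hα).ne'
        have := (mul_eq_zero.1 h3).resolve_left hκ
        exact (mul_self_eq_zero).1 this
      have hz : q s = 0 :=
        Polynomial.eq_zero_of_natDegree_lt_card_of_eval_eq_zero' (q s) (Aset' (m:ℝ) X) hall
          (by rw [hcard', (hq1 s le_rfl).1]; omega)
      exact (hq1 s le_rfl).2 hz
    · exact h
  have hqm0 : qm ≠ 0 := ne_of_gt hqm_pos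
  have htrFF : Matrix.trace ((F s).transpose * F s) = μ := by rw [hPsymm, hPidem, hμ]
  -- vanishing of trace (F s * Q k) for k < s
  have hFQ0 : ∀ k < s, Matrix.trace (F s * Q k) = 0 := by
    intro k hk
    obtain ⟨t, rfl⟩ : ∃ t, s = t + 1 := ⟨s - 1, by omega⟩
    have hzero : F (t+1) * Q k * F (t+1) = 0 := by
      have hv : ∀ v, (F (t+1) * Q k * F (t+1)).mulVec v = 0 := by
        intro v
        rw [← Matrix.mulVec_mulVec, ← Matrix.mulVec_mulVec]
        apply hP.2.2
        apply Pol_le_perp_Harm X t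
        apply Pol_mono X (by omega : k ≤ t)
        exact QmulVec_mem_Pol X k (q k) (le_of_eq (hq1 k (by omega)).1) _
      ext x y
      have := congrFun (hv (Pi.single y 1)) x
      simpa [Matrix.mulVec_single] using this
    calc Matrix.trace (F (t+1) * Q k) = Matrix.trace (F (t+1) * F (t+1) * Q k) := by
          rw [hPidem]
    _ = Matrix.trace (F (t+1) * Q k * F (t+1)) := (Matrix.trace_mul_cycle (F (t+1)) (Q k) (F (t+1))).symm
    _ = 0 := by rw [hzero, Matrix.trace_zero]
  -- interpolation polynomial
  set p₀ : Polynomial ℝ := Polynomial.C ((∏ α ∈ Aset X, ((m:ℝ) - α))⁻¹) *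
      ∏ α ∈ Aset X, (Polynomial.X - Polynomial.C α) with hp₀
  have hprod0 : ∏ α ∈ Aset X, ((m:ℝ) - α) ≠ 0 :=
    Finset.prod_ne_zero_iff.2 fun α hα => sub_ne_zero.2 fun h => hmA (h ▸ hα)
  have hp₀m : p₀.eval (m:ℝ) = 1 := by
    rw [hp₀]
    simp only [Polynomial.eval_mul, Polynomial.eval_C, Polynomial.eval_prod,
      Polynomial.eval_sub, Polynomial.eval_X]
    exact inv_mul_cancel₀ hprod0
  have hp₀α : ∀ α ∈ Aset X, p₀.eval α = 0 := by
    intro α hα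
    rw [hp₀]
    simp only [Polynomial.eval_mul, Polynomial.eval_C, Polynomial.eval_prod,
      Polynomial.eval_sub, Polynomial.eval_X]
    apply mul_eq_zero_of_right
    exact Finset.prod_eq_zero hα (by ring)
  have hp₀deg : p₀.natDegree ≤ s := by
    apply le_trans (Polynomial.natDegree_C_mul_le _ _)
    rw [Polynomial.natDegree_prod_of_monic _ _ (fun α _ => Polynomial.monic_X_sub_C α)]
    simp [Polynomial.natDegree_X_sub_C, hs]
  have hId : (Matrix.of fun x y : X => p₀.eval ⟪x.1, y.1⟫_ℝ) = (1 : Matrix X X ℝ) := by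
    ext x y
    by_cases hxy : x = y
    · subst hxy
      rw [Matrix.of_apply, hsph x.1 x.2, hp₀m, Matrix.one_apply_eq]
    · have hmem : (⟪x.1, y.1⟫_ℝ : ℝ) ∈ Aset X := Finset.mem_image.2
        ⟨(x.1, y.1), by convert (Finset.mem_filter (p := fun p : EuclideanSpace ℝ (Fin m) × EuclideanSpace ℝ (Fin m) => p.1 ≠ p.2)
          (s := X ×ˢ X) (a := (x.1, y.1))).2 ⟨Finset.mem_product.2 ⟨x.2, y.2⟩,
          fun h => hxy (Subtype.ext h)⟩, rfl⟩
      rw [Matrix.of_apply, hp₀α _ hmem, Matrix.one_apply_ne hxy]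
  obtain ⟨c, hc⟩ := rep_aux s q hq1 (s+1) p₀ hp₀deg (by omega)
  have heval : ∀ t : ℝ, p₀.eval t = ∑ k ∈ Finset.range (s+1), c k * (q k).eval t := by
    intro t
    rw [hc, Polynomial.eval_finset_sum]
    exact Finset.sum_congr rfl fun k _ => by rw [Polynomial.eval_mul, Polynomial.eval_C]
  have hexp : ∀ A : Matrix X X ℝ,
      Matrix.trace A = ∑ k ∈ Finset.range (s+1), c k * Matrix.trace (A * Q k) := by
    intro A
    have h1 : Matrix.trace A
        = Matrix.trace (A * Matrix.of fun x y : X => p₀.eval ⟪x.1, y.1⟫_ℝ) := by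
      rw [hId, Matrix.mul_one]
    calc Matrix.trace A = ∑ x : X, ∑ y : X, A x y * p₀.eval ⟪y.1, x.1⟫_ℝ := by
          rw [h1, trace_mul]
          simp only [Matrix.of_apply]
    _ = ∑ x : X, ∑ y : X, ∑ k ∈ Finset.range (s+1), c k * (A x y * (q k).eval ⟪y.1,x.1⟫_ℝ) :=
        Finset.sum_congr rfl fun x _ => Finset.sum_congr rfl fun y _ => by
          rw [heval ⟪y.1,x.1⟫_ℝ, Finset.mul_sum]
          exact Finset.sum_congr rfl fun k _ => by ring
    _ = ∑ x : X, ∑ k ∈ Finset.range (s+1), ∑ y : X, c k * (A x y * (q k).eval ⟪y.1,x.1⟫_ℝ) :=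
        Finset.sum_congr rfl fun x _ => Finset.sum_comm
    _ = ∑ k ∈ Finset.range (s+1), ∑ x : X, ∑ y : X, c k * (A x y * (q k).eval ⟪y.1,x.1⟫_ℝ) :=
        Finset.sum_comm
    _ = ∑ k ∈ Finset.range (s+1), c k * Matrix.trace (A * Q k) := by
        refine Finset.sum_congr rfl fun k _ => ?_
        rw [trace_mul, Finset.mul_sum]
        refine Finset.sum_congr rfl fun x _ => ?_
        rw [Finset.mul_sum]
        exact Finset.sum_congr rfl fun y _ => by simp only [hQ, Matrix.of_apply]
  have htrQs : Matrix.trace (Q s) = n * qm := by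
    rw [Matrix.trace]
    have hdiag : ∀ x : X, (Q s).diag x = qm := by
      intro x
      rw [hQ]
      show (q s).eval ⟪x.1, x.1⟫_ℝ = qm
      rw [hsph x.1 x.2, hqm]
    rw [Finset.sum_congr rfl fun x _ => hdiag x, Finset.sum_const, nsmul_eq_mul,
      Finset.card_univ, Fintype.card_coe, hn]
  have hQsQk : ∀ k ≤ s, Matrix.trace (Q s * Q k) = n^2 * pInn (m:ℝ) X (q s) (q k) := by
    intro k hk
    rw [trace_mul, ← hpair_poly (q s) (q k)]
    refine Finset.sum_congr rfl fun x _ => Finset.sum_congr rfl fun y _ => ?_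
    rw [hQ]
    show (q s).eval ⟪x.1,y.1⟫_ℝ * (q k).eval ⟪y.1,x.1⟫_ℝ
      = (q s).eval ⟪x.1,y.1⟫_ℝ * (q k).eval ⟪x.1,y.1⟫_ℝ
    rw [real_inner_comm y.1 x.1]
  have hQexp : n * qm = c s * (n^2 * qm) := by
    have h1 := hexp (Q s)
    rw [htrQs] at h1
    rw [h1, Finset.sum_eq_single s]
    · rw [hQsQk s le_rfl, hqm_eq]
    · intro k hk hks
      rw [hQsQk k (Finset.mem_range_succ_iff.1 hk), hq2 s le_rfl k (Finset.mem_range_succ_iff.1 hk),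
        if_neg (fun h => hks h.symm), mul_zero, mul_zero]
    · intro hsmem
      exact absurd (Finset.self_mem_range_succ s) hsmem
  have hcs : c s = 1 / n := by
    have h4 : (c s * n - 1) * (n * qm) = 0 := by
      have h5 : c s * (n^2 * qm) - n * qm = 0 := by rw [← hQexp]; ring
      calc (c s * n - 1) * (n * qm) = c s * (n^2*qm) - n*qm := by ring
      _ = 0 := h5
    have h6 := (mul_eq_zero.1 h4).resolve_right (mul_ne_zero hn0 hqm0)
    have h7 : c s * n = 1 := by linarith
    field_simp
    linarith [h7]
  have hFQs : Matrix.trace (F s * Q s) = n * μ := by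
    have h1 := hexp (F s)
    rw [← hμ] at h1
    rw [Finset.sum_eq_single s] at h1
    · rw [hcs] at h1
      field_simp at h1
      linarith [h1]
    · intro k hk hks
      rw [hFQ0 k (lt_of_le_of_ne (Finset.mem_range_succ_iff.1 hk) hks), mul_zero]
    · intro hsmem
      exact absurd (Finset.self_mem_range_succ s) hsmem
  -- positivity of μ
  have hHarm_ne : Harm X s ≠ ⊥ := by
    intro hbot
    rcases Nat.eq_zero_or_pos s with hs0 | hspos
    · subst hs0
      obtain ⟨x₀, hx₀⟩ := hne
      have h1 : (fun _ : X => (1:ℝ)) ∈ Harm X 0 :=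
        Submodule.subset_span ⟨x₀, hx₀, Polynomial.C 1, by simp, by funext x; simp⟩
      rw [hbot] at h1
      have h2 := congrFun ((Submodule.mem_bot ℝ).1 h1) ⟨x₀, hx₀⟩
      simpa using h2
    · obtain ⟨t, rfl⟩ : ∃ t, s = t + 1 := ⟨s - 1, by omega⟩
      rw [degS] at hdeg
      have hSet : {i | Pol X i = ⊤}.Nonempty := by
        by_contra hempty
        rw [Set.not_nonempty_iff_eq_empty] at hempty
        rw [hempty, Nat.sInf_empty] at hdeg
        omega
      have htop : Pol X (t+1) = ⊤ := by
        have h := Nat.sInf_mem hSet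
        rw [hdeg] at h
        exact h
      have hnot : Pol X t ≠ ⊤ := by
        intro h
        have := Nat.sInf_le (show t ∈ {i | Pol X i = ⊤} from h)
        omega
      apply hnot
      rw [eq_top_iff]
      rintro v -
      obtain ⟨a, ha, hva⟩ := exists_decomp X (Pol X t) v
      have hmem : v - a ∈ Harm X (t+1) := by
        show v - a ∈ Pol X (t+1) ⊓ perp X (Pol X t)
        exact Submodule.mem_inf.2 ⟨htop ▸ Submodule.mem_top, hva⟩
      rw [hbot] at hmem
      have h0 : v - a = 0 := (Submodule.mem_bot ℝ).1 hmem
      have : v = a := by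
        have := sub_eq_zero.1 h0
        exact this
      rw [this]
      exact ha
  obtain ⟨h, hh, hh0⟩ := (Submodule.ne_bot_iff _).1 hHarm_ne
  have hFne : F s ≠ 0 := fun h0 => hh0 (by rw [← hP.2.1 h hh, h0, Matrix.zero_mulVec])
  have hA : ∑ x : X, ∑ y : X, F s x y * F s x y = μ := by
    have h1 := htrFF
    rw [trace_mul] at h1
    simp only [Matrix.transpose_apply] at h1
    rw [← h1]
    rw [Finset.sum_comm]
  have hμpos : 0 < μ := by
    rw [← hA]
    have hnn : ∀ x : X, (0:ℝ) ≤ ∑ y : X, F s x y * F s x y :=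
      fun x => Finset.sum_nonneg fun y _ => mul_self_nonneg _
    have hentry : ∃ x y : X, F s x y ≠ 0 := by
      by_contra hno
      push_neg at hno
      exact hFne (by ext a b; exact hno a b)
    obtain ⟨x₁, y₁, hxy1⟩ := hentry
    apply Finset.sum_pos' (fun x _ => hnn x)
    refine ⟨x₁, Finset.mem_univ _, ?_⟩
    apply Finset.sum_pos' (fun y _ => mul_self_nonneg _)
    exact ⟨y₁, Finset.mem_univ _, mul_self_pos.2 hxy1⟩
  -- the three double sums
  have hC : ∑ x : X, ∑ y : X, T x y * T x y = μ^2 / qm := by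
    have h1 : ∀ x y : X, T x y * T x y
        = (μ/(n*qm))^2 * ((q s).eval ⟪x.1,y.1⟫_ℝ * (q s).eval ⟪x.1,y.1⟫_ℝ) := by
      intro x y
      rw [hT]
      simp only [Matrix.of_apply]
      ring
    rw [Finset.sum_congr rfl fun x _ => Finset.sum_congr rfl fun y _ => h1 x y]
    rw [Finset.sum_congr rfl fun x _ => (Finset.mul_sum _ _ _).symm, ← Finset.mul_sum]
    rw [hpair_poly (q s) (q s), hqm_eq]
    field_simp
  have hTtrace : Matrix.trace (T.transpose * T) = μ^2 / qm := by
    rw [trace_mul, ← hC]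
    simp only [Matrix.transpose_apply]
    rw [Finset.sum_comm]
  have hB : ∑ x : X, ∑ y : X, F s x y * T x y = μ^2 / qm := by
    have h1 : ∀ x y : X, F s x y * T x y
        = (μ/(n*qm)) * (F s x y * (q s).eval ⟪x.1,y.1⟫_ℝ) := by
      intro x y
      rw [hT]
      simp only [Matrix.of_apply]
      ring
    rw [Finset.sum_congr rfl fun x _ => Finset.sum_congr rfl fun y _ => h1 x y]
    rw [Finset.sum_congr rfl fun x _ => (Finset.mul_sum _ _ _).symm, ← Finset.mul_sum]
    have h3 : ∑ x : X, ∑ y : X, F s x y * (q s).eval ⟪x.1,y.1⟫_ℝ = Matrix.trace (F s * Q s) := by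
      rw [trace_mul]
      refine Finset.sum_congr rfl fun x _ => Finset.sum_congr rfl fun y _ => ?_
      rw [hQ]
      show F s x y * (q s).eval ⟪x.1,y.1⟫_ℝ = F s x y * (q s).eval ⟪y.1,x.1⟫_ℝ
      rw [real_inner_comm y.1 x.1]
    rw [h3, hFQs]
    field_simp
  have hnonneg : 0 ≤ μ - μ^2/qm := by
    have hexp0 : (0:ℝ) ≤ ∑ p : X × X, (F s p.1 p.2 - T p.1 p.2)^2 :=
      Finset.sum_nonneg fun p _ => sq_nonneg _
    rw [sq_sum_expand (fun p : X × X => F s p.1 p.2) (fun p : X × X => T p.1 p.2)] at hexp0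
    rw [Fintype.sum_prod_type, Fintype.sum_prod_type, Fintype.sum_prod_type] at hexp0
    rw [hA, hB, hC] at hexp0
    linarith
  have hid : μ * (1 - μ / qm) = μ - μ^2/qm := by
    rw [mul_sub, mul_one, sq, mul_div_assoc]
  refine ⟨hμpos, ?_, ?_, hqm_pos, ?_⟩
  · rw [htrFF, hTtrace, hid]
  · rw [hid]
    exact hnonneg
  · have h2 : μ^2/qm*qm = μ^2 := div_mul_cancel₀ _ hqm0
    nlinarith [mul_nonneg hnonneg hqm_pos.le, h2, hμpos, hqm_pos]

end
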